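/- Let b > 0, V_G > 0, Q_L ≤ 0, p ∈ ℝ, and define Γ = p/(bV_G²) and Δ = -4Q_L/(bV_G²). If Δ + 4Γ² < 1, then the equations p = bV_GV_L sin(η) and Q_L = bV_L² - bV_LV_G cos(η) possess exactly one solution (η, V_L) ∈ [-π/2, π/2] × ℝ_{>0} satisfying V_L/V_G ≥ v₊, where v₊ = √((1/2)(1 - Δ/2 + √(1 - (4Γ² + Δ)))); moreover this solution satisfies V_L/V_G = v₊, and |η| ≤ γ₋ where sin(γ₋) = |Γ|/v₊ with γ₋ ∈ [0, π/4). -/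

import Mathlib

open Real

set_option maxHeartbeats 1600000

/-- Two-bus solvability: under `Δ + 4Γ² < 1` there is exactly one solution
`(η, V_L) ∈ [-π/2, π/2] × ℝ_{>0}` with `V_L/V_G ≥ v₊`; moreover that solution
satisfies `V_L/V_G = v₊` and `|η| ≤ γ₋`, where `γ₋ = arcsin(|Γ|/v₊) ∈ [0, π/4)`. -/
theorem stmt_9 (b VG QL p : ℝ) (hb : 0 < b) (hVG : 0 < VG) (hQL : QL ≤ 0)
    (Γ Δ : ℝ) (hΓdef : Γ = p / (b * VG ^ 2)) (hΔdef : Δ = -4 * QL / (b * VG ^ 2))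
    (h : Δ + 4 * Γ ^ 2 < 1) :
    let vp := Real.sqrt ((1 / 2) * (1 - Δ / 2 + Real.sqrt (1 - (4 * Γ ^ 2 + Δ))))
    let γm := Real.arcsin (|Γ| / vp)
    (∃! s : ℝ × ℝ, s.1 ∈ Set.Icc (-(π / 2)) (π / 2) ∧ 0 < s.2 ∧
        p = b * VG * s.2 * Real.sin s.1 ∧
        QL = b * s.2 ^ 2 - b * s.2 * VG * Real.cos s.1 ∧
        s.2 / VG ≥ vp) ∧
      γm ∈ Set.Ico (0 : ℝ) (π / 4) ∧ Real.sin γm = |Γ| / vp ∧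
      (∀ s : ℝ × ℝ, s.1 ∈ Set.Icc (-(π / 2)) (π / 2) → 0 < s.2 →
        p = b * VG * s.2 * Real.sin s.1 →
        QL = b * s.2 ^ 2 - b * s.2 * VG * Real.cos s.1 →
        s.2 / VG ≥ vp →
        s.2 / VG = vp ∧ |s.1| ≤ γm) := by
  intro vp γm
  have hvpdef : vp = Real.sqrt ((1 / 2) * (1 - Δ / 2 + Real.sqrt (1 - (4 * Γ ^ 2 + Δ)))) := rfl
  have hγmdef : γm = Real.arcsin (|Γ| / vp) := rfl
  clear_value vp γm
  have hK : (0:ℝ) < b * VG ^ 2 := by positivity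
  set S := Real.sqrt (1 - (4 * Γ ^ 2 + Δ)) with hSdef
  clear_value S
  have hΔ0 : 0 ≤ Δ := by
    rw [hΔdef]; apply div_nonneg (by linarith) hK.le
  have hSpos : 0 < S := by
    rw [hSdef]; exact Real.sqrt_pos.mpr (by nlinarith [sq_nonneg Γ])
  have hS2 : S ^ 2 = 1 - (4 * Γ ^ 2 + Δ) := by
    rw [hSdef]; exact Real.sq_sqrt (by nlinarith [sq_nonneg Γ])
  have hApos : 0 < (1 / 2) * (1 - Δ / 2 + S) := by nlinarith
  have hvp2 : vp ^ 2 = (1 / 2) * (1 - Δ / 2 + S) := by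
    rw [hvpdef]; exact Real.sq_sqrt hApos.le
  have hvppos : 0 < vp := by rw [hvpdef]; exact Real.sqrt_pos.mpr hApos
  have hbne := hb.ne'
  have hVGne := hVG.ne'
  have hvpne := hvppos.ne'
  have hkey : vp ^ 2 - Γ ^ 2 = ((1 + S) / 2) ^ 2 := by
    rw [hvp2]; linarith [hS2]
  have hΓle : Γ ^ 2 ≤ vp ^ 2 := by nlinarith [sq_nonneg ((1 + S) / 2)]
  have habsΓ : |Γ| ≤ vp := by
    have := abs_nonneg Γ
    nlinarith [sq_abs Γ]
  have hratio1 : |Γ| / vp ≤ 1 := by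
    rw [div_le_one hvppos]; exact habsΓ
  have hratio0 : 0 ≤ |Γ| / vp := div_nonneg (abs_nonneg Γ) hvppos.le
  have hsinγm : Real.sin γm = |Γ| / vp := by
    rw [hγmdef]; exact Real.sin_arcsin (by linarith) hratio1
  have hΓratio : -1 ≤ Γ / vp ∧ Γ / vp ≤ 1 := by
    constructor <;> [rw [le_div_iff₀ hvppos]; rw [div_le_one hvppos]] <;>
      cases abs_le.mp habsΓ <;> first | linarith | nlinarith
  have hsin0 : Real.sin (Real.arcsin (Γ / vp)) = Γ / vp :=
    Real.sin_arcsin hΓratio.1 hΓratio.2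
  have hcos0 : Real.cos (Real.arcsin (Γ / vp)) = ((1 + S) / 2) / vp := by
    rw [Real.cos_arcsin,
      show 1 - (Γ / vp) ^ 2 = (((1 + S) / 2) / vp) ^ 2 by
        field_simp; linear_combination 4 * hkey]
    exact Real.sqrt_sq (by positivity)
  -- main uniqueness lemma
  have main : ∀ s : ℝ × ℝ, s.1 ∈ Set.Icc (-(π / 2)) (π / 2) → 0 < s.2 →
      p = b * VG * s.2 * Real.sin s.1 →
      QL = b * s.2 ^ 2 - b * s.2 * VG * Real.cos s.1 →
      s.2 / VG ≥ vp →
      s.2 / VG = vp ∧ |s.1| = γm ∧ s.1 = Real.arcsin (Γ / vp) := by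
    rintro ⟨η, V⟩ ⟨hη1, hη2⟩ hV hp hq hge
    simp only at hη1 hη2 hV hp hq hge ⊢
    set v := V / VG with hvdef
    clear_value v
    have hvpos : 0 < v := by rw [hvdef]; exact div_pos hV hVG
    have e1 : v * Real.sin η = Γ := by
      rw [hΓdef, hp, hvdef]; field_simp
    have e2 : v * Real.cos η = v ^ 2 + Δ / 4 := by
      have hq' : QL / (b * VG ^ 2) = v ^ 2 - v * Real.cos η := by
        rw [hq, hvdef]; field_simp
      have hΔ' : QL / (b * VG ^ 2) = -Δ / 4 := by
        rw [hΔdef]; field_simp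
      linarith [hq'.symm.trans hΔ']
    have epy : Γ ^ 2 + (v ^ 2 + Δ / 4) ^ 2 = v ^ 2 := by
      have h1 := Real.sin_sq_add_cos_sq η
      linear_combination (-(v * Real.sin η + Γ)) * e1 +
        (-(v * Real.cos η + v ^ 2 + Δ / 4)) * e2 + v ^ 2 * h1
    have hfac : (v ^ 2 - vp ^ 2) * (v ^ 2 - (1 / 2) * (1 - Δ / 2 - S)) = 0 := by
      rw [hvp2]; linear_combination epy - (1 / 4) * hS2
    have hvge : vp ≤ v := hge
    have hsq : vp ^ 2 ≤ v ^ 2 := pow_le_pow_left₀ hvppos.le hvge 2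
    have hv2 : v ^ 2 = vp ^ 2 := by
      rcases mul_eq_zero.mp hfac with h0 | h0
      · linarith
      · rw [hvp2] at hsq; linarith
    have hveq : v = vp := by
      have h1 : Real.sqrt (v ^ 2) = Real.sqrt (vp ^ 2) := by rw [hv2]
      rwa [Real.sqrt_sq hvpos.le, Real.sqrt_sq hvppos.le] at h1
    have hsinη : Real.sin η = Γ / vp := by
      rw [← e1, hveq]; field_simp
    have hηeq : η = Real.arcsin (Γ / vp) := by
      rw [← hsinη, Real.arcsin_sin hη1 hη2]
    refine ⟨hveq, ?_, hηeq⟩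
    have habs : |Real.sin η| = Real.sin |η| := by
      rcases le_or_gt 0 η with hc | hc
      · rw [abs_of_nonneg hc, abs_of_nonneg]
        exact Real.sin_nonneg_of_nonneg_of_le_pi hc (by linarith [Real.pi_pos])
      · rw [abs_of_neg hc, Real.sin_neg, abs_of_nonpos]
        exact Real.sin_nonpos_of_nonpos_of_neg_pi_le hc.le (by linarith [Real.pi_pos])
    have hsabs : Real.sin |η| = |Γ| / vp := by
      rw [← habs, hsinη, abs_div, abs_of_pos hvppos]
    rw [hγmdef, ← hsabs,
      Real.arcsin_sin (by linarith [abs_nonneg η, Real.pi_pos]) (abs_le.mpr ⟨hη1, hη2⟩)]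
  constructor
  · refine ⟨(Real.arcsin (Γ / vp), vp * VG), ⟨?_, ?_, ?_, ?_, ?_⟩, ?_⟩
    · exact ⟨Real.neg_pi_div_two_le_arcsin _, Real.arcsin_le_pi_div_two _⟩
    · exact mul_pos hvppos hVG
    · simp only [hsin0]
      rw [hΓdef]; field_simp
    · simp only [hcos0]
      have hQLeq : QL = -Δ / 4 * (b * VG ^ 2) := by rw [hΔdef]; field_simp
      rw [hQLeq]
      field_simp
      linear_combination (-8) * hvp2
    · have : vp * VG / VG = vp := by field_simp
      rw [this]
    · rintro ⟨η, V⟩ hs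
      obtain ⟨hveq, _, hηeq⟩ := main (η, V) hs.1 hs.2.1 hs.2.2.1 hs.2.2.2.1 hs.2.2.2.2
      simp only at hveq hηeq ⊢
      refine Prod.ext hηeq ?_
      simp only
      have hVeq : V = vp * VG := (div_eq_iff hVGne).mp hveq
      exact hVeq
  · refine ⟨⟨by rw [hγmdef]; exact Real.arcsin_nonneg.mpr hratio0, ?_⟩, hsinγm, ?_⟩
    · have hlt : |Γ| / vp < Real.sin (π / 4) := by
        rw [Real.sin_pi_div_four]
        have h2 : 2 * Γ ^ 2 < vp ^ 2 := by rw [hvp2]; nlinarith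
        have hs2 : Real.sqrt 2 ^ 2 = 2 := Real.sq_sqrt (by norm_num)
        have hs2p : 0 < Real.sqrt 2 := Real.sqrt_pos.mpr (by norm_num)
        rw [div_lt_iff₀ hvppos]
        nlinarith [sq_abs Γ, abs_nonneg Γ, mul_pos hs2p hvppos]
      rw [hγmdef]
      exact (Real.arcsin_lt_iff_lt_sin ⟨by linarith, hratio1⟩
        ⟨by linarith [Real.pi_pos], by linarith [Real.pi_pos]⟩).mpr hlt
    · intro s h1 h2 h3 h4 h5
      obtain ⟨hveq, habsη, _⟩ := main s h1 h2 h3 h4 h5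
      exact ⟨hveq, le_of_eq habsη⟩
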